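/- For all positive integers m and n, the following identity of rational numbers holds: Σ_{k=−n}^{n} (−1)^k k^m / (2n−2k+1) · binom(4n+1, 2n+2k+1) = Σ_{j=1}^{n} Σ_{k=−j}^{j} 4^(n−j) (−1)^k k^m / (2n−2j+1) · binom(2n, 2j) · binom(2j, j−k). (In the paper the outer sum on the right runs over all j ≥ 1, but binom(2n, 2j) = 0 for j > n, so the sum truncates at j = n.) -/

import Mathlib

open Polynomial Finset

lemma coeff_one_add_X_sq_pow (m : ℕ) : ∀ d : ℕ,
    ((1 + X ^ 2 : ℕ[X]) ^ m).coeff d = if 2 ∣ d then m.choose (d / 2) else 0 := by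
  induction m with
  | zero =>
    intro d
    rcases d with _ | d
    · simp
    · simp only [pow_zero, coeff_one]
      rw [if_neg (by omega)]
      by_cases h2 : 2 ∣ (d+1)
      · rw [if_pos h2, Nat.choose_eq_zero_of_lt (by omega)]
      · rw [if_neg h2]
  | succ m ih =>
    intro d
    have he : ((1 + X ^ 2 : ℕ[X]) ^ (m+1)) = (1 + X^2)^m + (1 + X^2)^m * X^2 := by
      ring
    rw [he, coeff_add, coeff_mul_X_pow']
    rcases Nat.lt_or_ge d 2 with hd | hd
    · rw [if_neg (by omega)]
      interval_cases d <;> simp [ih]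
    · rw [if_pos hd, ih, ih]
      by_cases h2 : 2 ∣ d
      · rw [if_pos h2, if_pos (by omega), if_pos h2]
        obtain ⟨e, rfl⟩ := h2
        have h1 : 1 ≤ e := by omega
        obtain ⟨f, rfl⟩ := Nat.exists_eq_add_of_le h1
        have e1 : 2 * (1 + f) / 2 = f + 1 := by omega
        have e2 : (2 * (1 + f) - 2) / 2 = f := by omega
        rw [e1, e2, Nat.choose_succ_succ]
        ring
      · rw [if_neg h2, if_neg (by omega), if_neg h2]

lemma keygen (N κ : ℕ) :
    ∑ j ∈ range (N+1), 2^(N-2*j) * N.choose (2*j) * (2*j).choose (j+κ)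
      = (2*N).choose (N+2*κ) := by
  have hpoly : ((1+X:ℕ[X])^(2*N)) = (2*X + (1+X^2))^N := by
    rw [pow_mul]
    congr 1
    ring
  have h1 : ((2*X + (1+X^2) : ℕ[X])^N).coeff (N+2*κ) = (2*N).choose (N+2*κ) := by
    rw [← hpoly, coeff_one_add_X_pow, Nat.cast_id]
  rw [add_pow, finset_sum_coeff] at h1
  have hterm : ∀ i ∈ range (N+1),
      ((2*X:ℕ[X])^i * (1+X^2)^(N-i) * ((N.choose i : ℕ) : ℕ[X])).coeff (N+2*κ)
      = 2^i * N.choose i *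
          (if 2 ∣ (N + 2*κ - i) then (N-i).choose ((N+2*κ-i)/2) else 0) := by
    intro i hi
    have hiN : i ≤ N := by have := mem_range.mp hi; omega
    rw [coeff_mul_natCast]
    have h2 : ((2:ℕ[X])*X)^i = ((2^i : ℕ):ℕ[X]) * X^i := by push_cast; ring
    rw [h2, mul_assoc, coeff_natCast_mul]
    rw [show N + 2*κ = (N + 2*κ - i) + i from by omega, coeff_X_pow_mul,
      coeff_one_add_X_sq_pow]
    simp only [Nat.add_sub_cancel, Nat.cast_id]
    ring

  rw [Finset.sum_congr rfl hterm] at h1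
  rw [← h1]
  -- now reindex
  have hA : ∑ i ∈ range (N+1), (2^i * N.choose i *
        (if 2 ∣ (N + 2*κ - i) then (N-i).choose ((N+2*κ-i)/2) else 0))
      = ∑ i ∈ (range (N+1)).filter (fun i => (N-i) % 2 = 0), (2^i * N.choose i *
        (if 2 ∣ (N + 2*κ - i) then (N-i).choose ((N+2*κ-i)/2) else 0)) := by
    refine (Finset.sum_filter_of_ne ?_).symm
    intro i hi hne
    have hiN : i ≤ N := by have := mem_range.mp hi; omega
    by_contra hpar
    have : ¬ 2 ∣ (N + 2*κ - i) := by omega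
    rw [if_neg this, mul_zero] at hne
    exact hne rfl
  have hB : ∑ j ∈ range (N+1), 2^(N-2*j) * N.choose (2*j) * (2*j).choose (j+κ)
      = ∑ j ∈ (range (N+1)).filter (fun j => 2*j ≤ N),
          2^(N-2*j) * N.choose (2*j) * (2*j).choose (j+κ) := by
    refine (Finset.sum_filter_of_ne ?_).symm
    intro j hj hne
    by_contra hlt
    rw [Nat.choose_eq_zero_of_lt (by omega), mul_zero, zero_mul] at hne
    exact hne rfl
  rw [hA, hB]
  refine Finset.sum_nbij' (fun j => N - 2*j) (fun i => (N - i)/2) ?_ ?_ ?_ ?_ ?_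
  · intro j hj
    simp only [mem_filter, mem_range] at hj ⊢
    omega
  · intro i hi
    simp only [mem_filter, mem_range] at hi ⊢
    omega
  · intro j hj
    simp only [mem_filter, mem_range] at hj
    show (N - (N - 2*j))/2 = j
    omega
  · intro i hi
    simp only [mem_filter, mem_range] at hi
    show N - 2*((N - i)/2) = i
    omega
  · intro j hj
    simp only [mem_filter, mem_range] at hj
    show _ = 2^(N-2*j) * N.choose (N-2*j) * (if 2 ∣ (N + 2*κ - (N-2*j)) then (N-(N-2*j)).choose ((N+2*κ-(N-2*j))/2) else 0)
    have h2j : 2*j ≤ N := hj.2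
    have e1 : N + 2*κ - (N - 2*j) = 2*(j+κ) := by omega
    have e2 : N - (N - 2*j) = 2*j := by omega
    rw [e1, e2, if_pos ⟨j+κ, by omega⟩]
    have e3 : 2*(j+κ)/2 = j + κ := by omega
    have e4 : N.choose (N - 2*j) = N.choose (2*j) := Nat.choose_symm h2j
    rw [e3, e4]

lemma nkey (n κ : ℕ) (hκn : κ ≤ n) :
    ∑ j ∈ Icc κ n, 2 * 4^(n-j) * (2*n+1).choose (2*j) * (2*j).choose (j+κ)
      = (4*n+2).choose (2*n+2*κ+1) := by
  have h := keygen (2*n+1) κ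
  have hre : (2*(2*n+1)) = 4*n+2 := by ring
  have hre2 : (2*n+1) + 2*κ = 2*n+2*κ+1 := by ring
  rw [hre, hre2] at h
  rw [← h]
  have hcong : ∀ j ∈ Icc κ n, 2 * 4^(n-j) * (2*n+1).choose (2*j) * (2*j).choose (j+κ)
      = 2^(2*n+1-2*j) * (2*n+1).choose (2*j) * (2*j).choose (j+κ) := by
    intro j hj
    have hjn : j ≤ n := (mem_Icc.mp hj).2
    have e : 2*n+1-2*j = 2*(n-j)+1 := by omega
    have h2 : (2:ℕ)^(2*n+1-2*j) = 2*4^(n-j) := by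
      rw [e, pow_succ, pow_mul]
      norm_num
      ring
    rw [h2]
  rw [Finset.sum_congr rfl hcong]
  refine Finset.sum_subset ?_ ?_
  · intro j hj
    rw [mem_range]
    have := mem_Icc.mp hj
    omega
  · intro j hj hnot
    simp only [mem_Icc, mem_range] at hj hnot
    rcases Nat.lt_or_ge j κ with h' | h'
    · have hz : (2*j).choose (j+κ) = 0 := Nat.choose_eq_zero_of_lt (by omega)
      rw [hz, mul_zero]
    · have hz : (2*n+1).choose (2*j) = 0 := Nat.choose_eq_zero_of_lt (by omega)
      rw [hz, mul_zero, zero_mul]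

lemma qkey_aux (n κ : ℕ) (hκn : κ ≤ n) :
    ∑ j ∈ Icc κ n, ((4:ℚ)^(n-j) / ((2*n-2*j+1 : ℕ) : ℚ) * ((2*n).choose (2*j) : ℚ)
        * ((2*j).choose (j+κ) : ℚ))
      = ((4*n+2).choose (2*n+2*κ+1) : ℚ) / ((4*n+2 : ℕ) : ℚ) := by
  have hterm : ∀ j ∈ Icc κ n, (4:ℚ)^(n-j) / ((2*n-2*j+1 : ℕ) : ℚ) * ((2*n).choose (2*j) : ℚ)
        * ((2*j).choose (j+κ) : ℚ)
      = ((2 * 4^(n-j) * (2*n+1).choose (2*j) * (2*j).choose (j+κ) : ℕ) : ℚ)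
          / ((4*n+2 : ℕ) : ℚ) := by
    intro j hj
    have hjn : j ≤ n := (mem_Icc.mp hj).2
    have hb : (2*n).choose (2*j) * (2*n+1) = (2*n+1).choose (2*j) * (2*n-2*j+1) := by
      have := Nat.choose_mul_succ_eq (2*n) (2*j)
      have e : 2*n+1-2*j = 2*n-2*j+1 := by omega
      rw [e] at this
      exact this
    have hbq : ((2*n).choose (2*j) : ℚ) * (2*n+1) = ((2*n+1).choose (2*j) : ℚ)
        * ((2*n-2*j+1 : ℕ) : ℚ) := by exact_mod_cast hb
    have hd1 : ((2*n-2*j+1 : ℕ) : ℚ) ≠ 0 := by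
      exact Nat.cast_ne_zero.mpr (by omega)
    have hd2 : ((4*n+2 : ℕ) : ℚ) ≠ 0 := by exact Nat.cast_ne_zero.mpr (by omega)
    set D : ℚ := ((2*n-2*j+1 : ℕ) : ℚ) with hD
    push_cast
    field_simp
    linear_combination (2 * (((2*j).choose (j+κ) : ℕ) : ℚ)) * hbq
  rw [Finset.sum_congr rfl hterm, ← Finset.sum_div, ← Nat.cast_sum, nkey n κ hκn]

lemma qkey_pos (n κ : ℕ) (hκn : κ ≤ n) :
    ((4*n+1).choose (2*n+2*κ+1) : ℚ) / ((2*n-2*κ+1 : ℕ) : ℚ)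
      = ∑ j ∈ Icc κ n, ((4:ℚ)^(n-j) / ((2*n-2*j+1 : ℕ) : ℚ) * ((2*n).choose (2*j) : ℚ)
          * ((2*j).choose (j+κ) : ℚ)) := by
  rw [qkey_aux n κ hκn]
  have ha : (4*n+1).choose (2*n+2*κ+1) * (4*n+2) = (4*n+2).choose (2*n+2*κ+1) * (2*n-2*κ+1) := by
    have := Nat.choose_mul_succ_eq (4*n+1) (2*n+2*κ+1)
    have e : 4*n+1+1-(2*n+2*κ+1) = 2*n-2*κ+1 := by omega
    rw [e] at this
    exact this
  have hd1 : ((2*n-2*κ+1 : ℕ) : ℚ) ≠ 0 := by exact Nat.cast_ne_zero.mpr (by omega)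
  have hd2 : ((4*n+2 : ℕ) : ℚ) ≠ 0 := by exact Nat.cast_ne_zero.mpr (by omega)
  rw [div_eq_div_iff hd1 hd2]
  exact_mod_cast ha

lemma qkey_neg (n κ : ℕ) (hκn : κ ≤ n) :
    ((4*n+1).choose (2*n-2*κ+1) : ℚ) / ((2*n+2*κ+1 : ℕ) : ℚ)
      = ∑ j ∈ Icc κ n, ((4:ℚ)^(n-j) / ((2*n-2*j+1 : ℕ) : ℚ) * ((2*n).choose (2*j) : ℚ)
          * ((2*j).choose (j+κ) : ℚ)) := by
  rw [qkey_aux n κ hκn]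
  have hsymm : (4*n+2).choose (2*n+2*κ+1) = (4*n+2).choose (2*n-2*κ+1) := by
    have h := Nat.choose_symm (n := 4*n+2) (k := 2*n+2*κ+1) (by omega)
    have e : 4*n+2-(2*n+2*κ+1) = 2*n-2*κ+1 := by omega
    rw [e] at h
    exact h.symm
  rw [hsymm]
  have ha : (4*n+1).choose (2*n-2*κ+1) * (4*n+2) = (4*n+2).choose (2*n-2*κ+1) * (2*n+2*κ+1) := by
    have := Nat.choose_mul_succ_eq (4*n+1) (2*n-2*κ+1)
    have e : 4*n+1+1-(2*n-2*κ+1) = 2*n+2*κ+1 := by omega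
    rw [e] at this
    exact this
  have hd1 : ((2*n+2*κ+1 : ℕ) : ℚ) ≠ 0 := by exact Nat.cast_ne_zero.mpr (by omega)
  have hd2 : ((4*n+2 : ℕ) : ℚ) ≠ 0 := by exact Nat.cast_ne_zero.mpr (by omega)
  rw [div_eq_div_iff hd1 hd2]
  exact_mod_cast ha

lemma perk (m n : ℕ) (hm : 0 < m) (k : ℤ) (hk1 : -(n:ℤ) ≤ k) (hk2 : k ≤ (n:ℤ)) :
    (((k.negOnePow : ℤ) * k ^ m : ℤ) : ℚ) / (2 * (n : ℚ) - 2 * (k : ℚ) + 1) *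
        (Nat.choose (4 * n + 1) (2 * (n : ℤ) + 2 * k + 1).toNat : ℚ)
    = ∑ j ∈ Finset.Icc 1 n, (if k.natAbs ≤ j then
        (4 : ℚ) ^ (n - j) *
          (((k.negOnePow : ℤ) * k ^ m : ℤ) : ℚ) / (2 * (n : ℚ) - 2 * (j : ℚ) + 1) *
          (Nat.choose (2 * n) (2 * j) : ℚ) *
          (Nat.choose (2 * j) ((j : ℤ) - k).toNat : ℚ) else 0) := by
  by_cases hk0 : k = 0
  · subst hk0
    simp [zero_pow hm.ne']
  · have hκ1 : 1 ≤ k.natAbs := by omega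
    have hκn : k.natAbs ≤ n := by omega
    set κ := k.natAbs with hκdef
    set c : ℚ := (((k.negOnePow : ℤ) * k ^ m : ℤ) : ℚ) with hc
    have hsum : ∑ j ∈ Finset.Icc 1 n, (if κ ≤ j then
          (4 : ℚ) ^ (n - j) * c / (2 * (n : ℚ) - 2 * (j : ℚ) + 1) *
            (Nat.choose (2 * n) (2 * j) : ℚ) *
            (Nat.choose (2 * j) ((j : ℤ) - k).toNat : ℚ) else 0)
        = ∑ j ∈ Finset.Icc κ n,
          (4 : ℚ) ^ (n - j) * c / (2 * (n : ℚ) - 2 * (j : ℚ) + 1) *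
            (Nat.choose (2 * n) (2 * j) : ℚ) *
            (Nat.choose (2 * j) ((j : ℤ) - k).toNat : ℚ) := by
      rw [← Finset.sum_subset (Finset.Icc_subset_Icc hκ1 le_rfl) ?_]
      · exact Finset.sum_congr rfl fun j hj => if_pos (Finset.mem_Icc.mp hj).1
      · intro j hj hnot
        rw [Finset.mem_Icc] at hj
        rw [Finset.mem_Icc] at hnot
        exact if_neg (by omega)
    rw [hsum]
    have hDenj : ∀ j ∈ Finset.Icc κ n,
        2 * (n : ℚ) - 2 * (j : ℚ) + 1 = ((2*n-2*j+1 : ℕ) : ℚ) := by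
      intro j hj
      have hjn : j ≤ n := (Finset.mem_Icc.mp hj).2
      have e : (2*n-2*j+1 : ℕ) = 2*(n-j)+1 := by omega
      rw [e]
      push_cast [Nat.cast_sub hjn]
      ring
    rcases Int.natAbs_eq k with hks | hks
    · -- k = κ ≥ 0
      have ht1 : (2 * (n : ℤ) + 2 * k + 1).toNat = 4*n+2 - (2*n+2*κ+1) + (2*n+2*κ+1) - (4*n+2-(2*n+2*κ+1)) := by omega
      have ht1' : (2 * (n : ℤ) + 2 * k + 1).toNat = 2*n+2*κ+1 := by omega
      have hq : (k : ℚ) = (κ : ℚ) := by rw [hks]; exact Int.cast_natCast κ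
      have hDen : 2 * (n : ℚ) - 2 * (k : ℚ) + 1 = ((2*n-2*κ+1 : ℕ) : ℚ) := by
        have e : (2*n-2*κ+1 : ℕ) = 2*(n-κ)+1 := by omega
        rw [hq, e]
        push_cast [Nat.cast_sub hκn]
        ring
      have hstart : c / (2 * (n : ℚ) - 2 * (k : ℚ) + 1) *
            (Nat.choose (4 * n + 1) (2 * (n : ℤ) + 2 * k + 1).toNat : ℚ)
          = c * ((Nat.choose (4*n+1) (2*n+2*κ+1) : ℚ) / ((2*n-2*κ+1 : ℕ) : ℚ)) := by
        rw [ht1', hDen]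
        ring
      rw [hstart, qkey_pos n κ hκn, Finset.mul_sum]
      refine Finset.sum_congr rfl fun j hj => ?_
      have hjκ : κ ≤ j := (Finset.mem_Icc.mp hj).1
      have ht2 : ((j : ℤ) - k).toNat = j - κ := by omega
      have hch : (2*j).choose (j - κ) = (2*j).choose (j + κ) := by
        have h := Nat.choose_symm (n := 2*j) (k := j+κ) (by omega)
        have e : 2*j - (j+κ) = j - κ := by omega
        rw [e] at h
        exact h
      rw [ht2, hch, hDenj j hj]
      ring
    · -- k = -κ
      have hklt : k < 0 := by omega
      have ht1' : (2 * (n : ℤ) + 2 * k + 1).toNat = 2*n-2*κ+1 := by omega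
      have hq : (k : ℚ) = -(κ : ℚ) := by rw [hks, Int.cast_neg, Int.cast_natCast]
      have hDen : 2 * (n : ℚ) - 2 * (k : ℚ) + 1 = ((2*n+2*κ+1 : ℕ) : ℚ) := by
        rw [hq]
        push_cast
        ring
      have hstart : c / (2 * (n : ℚ) - 2 * (k : ℚ) + 1) *
            (Nat.choose (4 * n + 1) (2 * (n : ℤ) + 2 * k + 1).toNat : ℚ)
          = c * ((Nat.choose (4*n+1) (2*n-2*κ+1) : ℚ) / ((2*n+2*κ+1 : ℕ) : ℚ)) := by
        rw [ht1', hDen]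
        ring
      rw [hstart, qkey_neg n κ hκn, Finset.mul_sum]
      refine Finset.sum_congr rfl fun j hj => ?_
      have hjκ : κ ≤ j := (Finset.mem_Icc.mp hj).1
      have ht2 : ((j : ℤ) - k).toNat = j + κ := by omega
      rw [ht2, hDenj j hj]
      ring
/-- For all positive integers `m`, `n`:
`∑_{k=−n}^{n} (−1)^k k^m/(2n−2k+1) ⬝ C(4n+1, 2n+2k+1)
  = ∑_{j=1}^{n} ∑_{k=−j}^{j} 4^(n−j)(−1)^k k^m/(2n−2j+1) ⬝ C(2n, 2j) C(2j, j−k)`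
(the outer sum over `j ≥ 1` truncates at `j = n` since `C(2n, 2j) = 0` for `j > n`). -/
theorem combinatorial_identity_general_even (m n : ℕ) (hm : 0 < m) (hn : 0 < n) :
    ∑ k ∈ Finset.Icc (-(n : ℤ)) (n : ℤ),
      (((k.negOnePow : ℤ) * k ^ m : ℤ) : ℚ) / (2 * (n : ℚ) - 2 * (k : ℚ) + 1) *
        (Nat.choose (4 * n + 1) (2 * (n : ℤ) + 2 * k + 1).toNat : ℚ)
    = ∑ j ∈ Finset.Icc 1 n, ∑ k ∈ Finset.Icc (-(j : ℤ)) (j : ℤ),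
        (4 : ℚ) ^ (n - j) *
          (((k.negOnePow : ℤ) * k ^ m : ℤ) : ℚ) / (2 * (n : ℚ) - 2 * (j : ℚ) + 1) *
          (Nat.choose (2 * n) (2 * j) : ℚ) *
          (Nat.choose (2 * j) ((j : ℤ) - k).toNat : ℚ) := by
  have hRHS : ∀ j ∈ Finset.Icc 1 n,
      (∑ k ∈ Finset.Icc (-(j : ℤ)) (j : ℤ),
        (4 : ℚ) ^ (n - j) *
          (((k.negOnePow : ℤ) * k ^ m : ℤ) : ℚ) / (2 * (n : ℚ) - 2 * (j : ℚ) + 1) *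
          (Nat.choose (2 * n) (2 * j) : ℚ) *
          (Nat.choose (2 * j) ((j : ℤ) - k).toNat : ℚ))
      = ∑ k ∈ Finset.Icc (-(n : ℤ)) (n : ℤ), (if k.natAbs ≤ j then
        (4 : ℚ) ^ (n - j) *
          (((k.negOnePow : ℤ) * k ^ m : ℤ) : ℚ) / (2 * (n : ℚ) - 2 * (j : ℚ) + 1) *
          (Nat.choose (2 * n) (2 * j) : ℚ) *
          (Nat.choose (2 * j) ((j : ℤ) - k).toNat : ℚ) else 0) := by
    intro j hj
    have hjn : j ≤ n := (Finset.mem_Icc.mp hj).2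
    have hstep : ∀ k ∈ Finset.Icc (-(j : ℤ)) (j : ℤ),
        (4 : ℚ) ^ (n - j) *
          (((k.negOnePow : ℤ) * k ^ m : ℤ) : ℚ) / (2 * (n : ℚ) - 2 * (j : ℚ) + 1) *
          (Nat.choose (2 * n) (2 * j) : ℚ) *
          (Nat.choose (2 * j) ((j : ℤ) - k).toNat : ℚ)
        = (if k.natAbs ≤ j then
        (4 : ℚ) ^ (n - j) *
          (((k.negOnePow : ℤ) * k ^ m : ℤ) : ℚ) / (2 * (n : ℚ) - 2 * (j : ℚ) + 1) *
          (Nat.choose (2 * n) (2 * j) : ℚ) *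
          (Nat.choose (2 * j) ((j : ℤ) - k).toNat : ℚ) else 0) := by
      intro k hk
      rw [Finset.mem_Icc] at hk
      exact (if_pos (by omega)).symm
    rw [Finset.sum_congr rfl hstep]
    refine Finset.sum_subset (Finset.Icc_subset_Icc (by omega) (by omega)) ?_
    intro k hk hnot
    rw [Finset.mem_Icc] at hk
    rw [Finset.mem_Icc] at hnot
    exact if_neg (by omega)
  rw [Finset.sum_congr rfl hRHS, Finset.sum_comm]
  refine Finset.sum_congr rfl fun k hk => ?_
  have hmem := Finset.mem_Icc.mp hk
  exact perk m n hm k hmem.1 hmem.2
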